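/- Let l ≥ 3 be an integer and let H be a 3-graph. Then the set of light edges of H is the union of at most 6l−11 simple hypergraphs; that is, the light edges of H can be partitioned into at most 6l−11 classes such that within each class any two distinct edges intersect in at most one vertex. -/
import Mathlib


open Finset

section Defs

variable {α : Type*} [DecidableEq α]

/-- `e 0, …, e (l-1)` form a loose cycle of length `l`: distinct edges, each of size
at least 2, cyclically consecutive edges meet in exactly one vertex, all other pairs
of edges are disjoint. -/
def IsLooseCycleOn (l : ℕ) (e : ℕ → Finset α) : Prop :=
  (∀ i < l, ∀ j < l, i ≠ j → e i ≠ e j) ∧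
  (∀ i < l, 2 ≤ (e i).card) ∧
  (∀ i < l, (e i ∩ e ((i + 1) % l)).card = 1) ∧
  (∀ i < l, ∀ j < l, j ≠ i → j ≠ (i + 1) % l → i ≠ (j + 1) % l → e i ∩ e j = ∅)

/-- A hypergraph with edge set `E` contains a loose cycle of length `l`. -/
def ContainsLooseCycle (l : ℕ) (E : Set (Finset α)) : Prop :=
  ∃ e : ℕ → Finset α, IsLooseCycleOn l e ∧ ∀ i < l, e i ∈ E

/-- A hypergraph with edge set `E` contains an `r`-uniform loose cycle of length `l`. -/
def ContainsUniformLooseCycle (r l : ℕ) (E : Set (Finset α)) : Prop :=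
  ∃ e : ℕ → Finset α, IsLooseCycleOn l e ∧ (∀ i < l, (e i).card = r) ∧ ∀ i < l, e i ∈ E

/-- `f 0, …, f (k-1)` form a simple path of length `k`: each edge has size at least 2,
consecutive edges meet, non-consecutive edges are disjoint, and any two distinct
edges meet in at most one vertex. -/
def IsSimplePathOn (k : ℕ) (f : ℕ → Finset α) : Prop :=
  (∀ i < k, 2 ≤ (f i).card) ∧
  (∀ i, i + 1 < k → (f i ∩ f (i + 1)).Nonempty) ∧
  (∀ i < k, ∀ j < k, i < j → j ≠ i + 1 → f i ∩ f j = ∅) ∧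
  (∀ i < k, ∀ j < k, i ≠ j → (f i ∩ f j).card ≤ 1)

/-- The simple path `f 0, …, f (k-1)` joins `a` to `b`. -/
def SimplePathJoins (k : ℕ) (f : ℕ → Finset α) (a b : α) : Prop :=
  IsSimplePathOn k f ∧ a ∈ f 0 ∧ b ∈ f (k - 1) ∧
  (2 ≤ k → a ∉ f 1 ∧ b ∉ f (k - 2))

/-- `p` is a heavy pair of the 3-graph `H` (with respect to the parameter `l`):
it is a pair of vertices contained in at least `2l-2` edges of `H`. -/
def PairHeavy (l : ℕ) (H : Finset (Finset α)) (p : Finset α) : Prop :=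
  p.card = 2 ∧ 2 * l - 2 ≤ (H.filter fun e => p ⊆ e).card

/-- `e` is a light edge of the 3-graph `H`: an edge of `H` containing no heavy pair. -/
def EdgeLight (l : ℕ) (H : Finset (Finset α)) (e : Finset α) : Prop :=
  e ∈ H ∧ ∀ p ⊆ e, ¬ PairHeavy l H p

/-- The reduced hypergraph `H*` of a 3-graph `H`: its edges are the light edges of `H`
together with the heavy pairs of `H`. -/
def Reduced (l : ℕ) (H : Finset (Finset α)) : Set (Finset α) :=
  {e | EdgeLight l H e ∨ PairHeavy l H e}

/-- `(X, Y)` is an extender in the 3-graph `H`. -/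
def IsExtender (l : ℕ) (H : Finset (Finset α)) (X Y : Finset α) : Prop :=
  Disjoint X Y ∧ Y.card ≤ 2 * X.card ∧
  ∀ u ∈ X, ∀ v ∈ X, u ≠ v → ∀ S : Finset α,
    Disjoint S ({u, v} ∪ Y) → S.card ≤ 2 * l - 5 →
      ∃ f : ℕ → Finset α, SimplePathJoins 2 f u v ∧ (∀ i < 2, f i ∈ H) ∧
        ∀ i < 2, Disjoint (f i) S

/-- `X` is an independent set of the hypergraph with edge set `E`. -/
def IndepIn (E : Set (Finset α)) (X : Finset α) : Prop := ∀ e ∈ E, ¬ e ⊆ X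

end Defs

/-- The light edges of a 3-graph `H` are the union of at most `6l - 11`
simple hypergraphs. -/

lemma greedy_coloring {β : Type*} [DecidableEq β] (N : ℕ) (hN : 0 < N)
    (r : β → β → Prop) [DecidableRel r] (hsym : ∀ a b, r a b → r b a)
    (L : Finset β)
    (hdeg : ∀ e ∈ L, (L.filter (fun f => f ≠ e ∧ r e f)).card < N) :
    ∃ c : β → Fin N, ∀ e ∈ L, ∀ f ∈ L, e ≠ f → r e f → c e ≠ c f := by
  classical
  induction L using Finset.induction_on with
  | empty => exact ⟨fun _ => ⟨0, hN⟩, by simp⟩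
  | @insert a s ha ih =>
    obtain ⟨c, hc⟩ := ih (fun e he => lt_of_le_of_lt
      (Finset.card_le_card (Finset.monotone_filter_left _ (Finset.subset_insert a s)))
      (hdeg e (Finset.mem_insert_of_mem he)))
    have hnb : (s.filter (fun f => r a f)).card < N := by
      refine lt_of_le_of_lt (Finset.card_le_card ?_) (hdeg a (Finset.mem_insert_self a s))
      intro f hf
      simp only [Finset.mem_filter] at hf ⊢
      exact ⟨Finset.mem_insert_of_mem hf.1, fun h => ha (h ▸ hf.1), hf.2⟩
    have himg : ((s.filter (fun f => r a f)).image c).card < (Finset.univ : Finset (Fin N)).card := by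
      refine lt_of_le_of_lt Finset.card_image_le ?_
      simpa using hnb
    have hss : ((s.filter (fun f => r a f)).image c) ⊂ Finset.univ :=
      Finset.ssubset_univ_iff.2 (fun h => absurd (h ▸ himg) (lt_irrefl _))
    obtain ⟨i, -, hi⟩ := Finset.exists_of_ssubset hss
    refine ⟨fun x => if x = a then i else c x, ?_⟩
    intro e he f hf hne hr
    by_cases hea : e = a <;> by_cases hfa : f = a
    · exact absurd (hea.trans hfa.symm) hne
    · simp only [if_pos hea, if_neg hfa]
      intro h
      have hf' : f ∈ s := (Finset.mem_insert.1 hf).resolve_left hfa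
      exact hi (Finset.mem_image.2 ⟨f, Finset.mem_filter.2 ⟨hf', hea ▸ hr⟩, h.symm⟩)
    · simp only [if_pos hfa, if_neg hea]
      intro h
      have he' : e ∈ s := (Finset.mem_insert.1 he).resolve_left hea
      exact hi (Finset.mem_image.2 ⟨e, Finset.mem_filter.2 ⟨he', hfa ▸ hsym _ _ hr⟩, h⟩)
    · simp only [if_neg hea, if_neg hfa]
      exact hc e ((Finset.mem_insert.1 he).resolve_left hea) f
        ((Finset.mem_insert.1 hf).resolve_left hfa) hne hr

theorem light_edges_decomposition {α : Type*} [DecidableEq α] (l : ℕ) (hl : 3 ≤ l)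
    (H : Finset (Finset α)) (h3 : ∀ e ∈ H, e.card = 3) :
    ∃ Hs : Fin (6 * l - 11) → Finset (Finset α),
      (∀ e, EdgeLight l H e ↔ ∃ i, e ∈ Hs i) ∧
      ∀ i, ∀ e ∈ Hs i, ∀ f ∈ Hs i, e ≠ f → (e ∩ f).card ≤ 1 := by
  classical
  have hN : 0 < 6 * l - 11 := by omega
  set L : Finset (Finset α) := H.filter (fun e => EdgeLight l H e) with hLdef
  have hmemL : ∀ e, e ∈ L ↔ EdgeLight l H e := by
    intro e
    simp only [hLdef, Finset.mem_filter]
    exact ⟨fun h => h.2, fun h => ⟨h.1, h⟩⟩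
  have hdeg : ∀ e ∈ L, (L.filter (fun f => f ≠ e ∧ 2 ≤ (e ∩ f).card)).card < 6 * l - 11 := by
    intro e he
    have hel : EdgeLight l H e := (hmemL e).1 he
    have heH : e ∈ H := hel.1
    have hsub : L.filter (fun f => f ≠ e ∧ 2 ≤ (e ∩ f).card) ⊆
        (e.powersetCard 2).biUnion (fun p => (H.filter fun f => p ⊆ f).erase e) := by
      intro f hf
      simp only [Finset.mem_filter] at hf
      obtain ⟨hfL, hfe, hcard⟩ := hf
      obtain ⟨p, hpsub, hpcard⟩ := Finset.exists_subset_card_eq hcard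
      refine Finset.mem_biUnion.2 ⟨p, Finset.mem_powersetCard.2
        ⟨hpsub.trans Finset.inter_subset_left, hpcard⟩, ?_⟩
      exact Finset.mem_erase.2 ⟨hfe, Finset.mem_filter.2
        ⟨((hmemL f).1 hfL).1, hpsub.trans Finset.inter_subset_right⟩⟩
    have hb : ∀ p ∈ e.powersetCard 2, ((H.filter fun f => p ⊆ f).erase e).card ≤ 2 * l - 4 := by
      intro p hp
      rw [Finset.mem_powersetCard] at hp
      have hnh := hel.2 p hp.1
      have hlt : (H.filter fun f => p ⊆ f).card < 2 * l - 2 := by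
        by_contra h
        exact hnh ⟨hp.2, by omega⟩
      have heMem : e ∈ H.filter fun f => p ⊆ f := Finset.mem_filter.2 ⟨heH, hp.1⟩
      have := Finset.card_erase_of_mem heMem
      omega
    calc (L.filter (fun f => f ≠ e ∧ 2 ≤ (e ∩ f).card)).card
        ≤ ((e.powersetCard 2).biUnion (fun p => (H.filter fun f => p ⊆ f).erase e)).card :=
          Finset.card_le_card hsub
      _ ≤ ∑ p ∈ e.powersetCard 2, ((H.filter fun f => p ⊆ f).erase e).card :=
          Finset.card_biUnion_le
      _ ≤ ∑ _p ∈ e.powersetCard 2, (2 * l - 4) := Finset.sum_le_sum hb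
      _ = (e.powersetCard 2).card * (2 * l - 4) := by rw [Finset.sum_const, smul_eq_mul]
      _ = 3 * (2 * l - 4) := by rw [Finset.card_powersetCard, h3 e heH]; rfl
      _ < 6 * l - 11 := by omega
  obtain ⟨c, hc⟩ := greedy_coloring (6 * l - 11) hN (fun e f => 2 ≤ (e ∩ f).card)
    (fun a b h => show 2 ≤ (b ∩ a).card by rwa [Finset.inter_comm]) L hdeg
  refine ⟨fun i => L.filter (fun e => c e = i), ?_, ?_⟩
  · intro e
    constructor
    · intro h
      exact ⟨c e, Finset.mem_filter.2 ⟨(hmemL e).2 h, rfl⟩⟩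
    · rintro ⟨i, hi⟩
      exact (hmemL e).1 (Finset.mem_filter.1 hi).1
  · intro i e he f hf hne
    simp only [Finset.mem_filter] at he hf
    by_contra h
    exact hc e he.1 f hf.1 hne (by omega) (he.2.trans hf.2.symm)
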